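/- Let g be a nonzero nilpotent real Lie algebra with an integrable complex structure J. Then g^2(J) = [g,g] + J[g,g] is a proper subspace of g. -/

import Mathlib

/-- (Salamon) If `g` is a nonzero nilpotent real Lie algebra with an integrable complex
structure `J`, then `g²(J) = [g,g] + J[g,g]` is a proper subspace of `g`. -/
theorem gJ2_proper
    {g : Type*} [LieRing g] [LieAlgebra ℝ g] [Nontrivial g]
    [LieModule.IsNilpotent g g] (J : g →ₗ[ℝ] g)
    (hJ2 : ∀ X : g, J (J X) = -X)
    (hNij : ∀ X Y : g, ⁅J X, J Y⁆ = ⁅X, Y⁆ + J ⁅J X, Y⁆ + J ⁅X, J Y⁆) :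
    (LieModule.lowerCentralSeries ℝ g g 1).toSubmodule ⊔
      Submodule.map J (LieModule.lowerCentralSeries ℝ g g 1).toSubmodule ≠ ⊤ := by
  intro h1
  set N : ℕ → Submodule ℝ g := fun j => (LieModule.lowerCentralSeries ℝ g g j).toSubmodule
    with hN
  have key : ∀ j, N j ⊔ Submodule.map J (N j) = ⊤ := by
    intro j
    induction j with
    | zero =>
      have : N 0 = ⊤ := by simp [hN]
      rw [this]; exact top_sup_eq _
    | succ j ih =>
      set T : Submodule ℝ g := N (j + 1) ⊔ Submodule.map J (N (j + 1)) with hT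
      -- T is J-invariant
      have hJT : ∀ x ∈ T, J x ∈ T := by
        intro x hx
        rcases Submodule.mem_sup.1 hx with ⟨a, ha, b', hb', rfl⟩
        rcases Submodule.mem_map.1 hb' with ⟨b, hb, rfl⟩
        have : J (a + J b) = J a + (-b) := by rw [map_add, hJ2]
        rw [this]
        exact add_mem (Submodule.mem_sup_right (Submodule.mem_map_of_mem ha))
          (Submodule.mem_sup_left (neg_mem hb))
      -- any single bracket into N (j+1)
      have hmem : ∀ (x m : g), m ∈ N j → ⁅x, m⁆ ∈ N (j + 1) := by
        intro x m hm
        have : ⁅x, m⁆ ∈ LieModule.lowerCentralSeries ℝ g g (j + 1) := by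
          rw [LieModule.lowerCentralSeries_succ]
          exact LieSubmodule.lie_mem_lie (LieSubmodule.mem_top x) hm
        exact this
      -- every bracket lies in T
      have hbr : ∀ X Y : g, ⁅X, Y⁆ ∈ T := by
        intro X Y
        have hX : X ∈ N j ⊔ Submodule.map J (N j) := by rw [ih]; exact Submodule.mem_top
        have hY : Y ∈ N j ⊔ Submodule.map J (N j) := by rw [ih]; exact Submodule.mem_top
        rcases Submodule.mem_sup.1 hX with ⟨a, ha, b', hb', rfl⟩
        rcases Submodule.mem_map.1 hb' with ⟨b, hb, rfl⟩
        rcases Submodule.mem_sup.1 hY with ⟨c, hc, d', hd', rfl⟩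
        rcases Submodule.mem_map.1 hd' with ⟨d, hd, rfl⟩
        have e1 : ⁅a, c⁆ ∈ T := Submodule.mem_sup_left (by
          have := hmem a c hc; exact this)
        have e2 : ⁅a, J d⁆ ∈ T := by
          have : ⁅a, J d⁆ = -⁅J d, a⁆ := by rw [lie_skew]
          rw [this]
          exact Submodule.mem_sup_left (neg_mem (hmem (J d) a ha))
        have e3 : ⁅J b, c⁆ ∈ T := Submodule.mem_sup_left (hmem (J b) c hc)
        have e4 : ⁅J b, J d⁆ ∈ T := by
          rw [hNij b d]
          have t1 : ⁅b, d⁆ ∈ T := Submodule.mem_sup_left (hmem b d hd)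
          have t2 : J ⁅J b, d⁆ ∈ T :=
            Submodule.mem_sup_right (Submodule.mem_map_of_mem (hmem (J b) d hd))
          have t3 : J ⁅b, J d⁆ ∈ T := by
            have h' : ⁅b, J d⁆ = -⁅J d, b⁆ := by rw [lie_skew]
            rw [h', map_neg]
            exact neg_mem (Submodule.mem_sup_right
              (Submodule.mem_map_of_mem (hmem (J d) b hb)))
          exact add_mem (add_mem t1 t2) t3
        have : ⁅a + J b, c + J d⁆ = ⁅a, c⁆ + ⁅a, J d⁆ + (⁅J b, c⁆ + ⁅J b, J d⁆) := by
          rw [lie_add, add_lie, add_lie]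
          abel
        rw [this]
        exact add_mem (add_mem e1 e2) (add_mem e3 e4)
      -- lcs 1 ≤ T
      have hlcs1 : N 1 ≤ T := by
        have h10 : LieModule.lowerCentralSeries ℝ g g 1 =
            ⁅(⊤ : LieIdeal ℝ g), (⊤ : LieSubmodule ℝ g g)⁆ := by
          rw [LieModule.lowerCentralSeries_succ]; rfl
        have : N 1 = Submodule.span ℝ { m : g | ∃ x ∈ (⊤ : LieIdeal ℝ g),
            ∃ n ∈ (⊤ : LieSubmodule ℝ g g), ⁅x, n⁆ = m } := by
          rw [hN]; simp only [h10]
          exact LieSubmodule.lieIdeal_oper_eq_linear_span' _ _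
        rw [this]
        apply Submodule.span_le.2
        rintro _ ⟨x, -, n, -, rfl⟩
        exact hbr x n
      have hJ1 : Submodule.map J (N 1) ≤ T := by
        rintro _ ⟨y, hy, rfl⟩
        exact hJT y (hlcs1 hy)
      have htop : (⊤ : Submodule ℝ g) ≤ T := h1 ▸ sup_le hlcs1 hJ1
      exact le_antisymm le_top htop
  obtain ⟨k, hk⟩ := LieModule.IsNilpotent.nilpotent ℝ g g
  have hNk : N k = ⊥ := by rw [hN]; simp [hk]
  have := key k
  rw [hNk, Submodule.map_bot, sup_idem] at this
  exact absurd this bot_ne_top
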